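/- Let d, l ≥ 1, m > 2 and L ∈ ℝ. Let f : ℝ^d → ℝ^d be Borel measurable and odd, and f_σ : ℝ^d → ℝ^{d×l} Borel measurable, such that for all x, x' ∈ ℝ^d: ⟨x − x', f(x) − f(x')⟩ + 2(m−1)|f_σ(x) − f_σ(x')|² ≤ L|x − x'|². Let μ, ν be Borel probability measures on ℝ^d with finite second moments such that ∫∫∫∫ [ (|x| + |y|)(|f(x−x')| + |f(y−y')|) + (|f_σ(x−x')| + |f_σ(y−y')|)² ] μ(dx')ν(dy')μ(dx)ν(dy) < ∞. Then: ∫∫ ( ⟨x − y, (f∗μ)(x) − (f∗ν)(y)⟩ + (m−1)|(f_σ∗μ)(x) − (f_σ∗ν)(y)|² ) μ(dx)ν(dy) ≤ 2·max(L, 0)·∫∫ |x − y|² μ(dx)ν(dy). -/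

import Mathlib

open scoped RealInnerProductSpace BigOperators
open MeasureTheory

lemma aux_sq_integral_le {α : Type*} [MeasurableSpace α] {π : Measure α} [IsProbabilityMeasure π]
    {u : α → ℝ} (hu : MemLp u 2 π) :
    (∫ q, u q ∂π) ^ 2 ≤ ∫ q, u q ^ 2 ∂π := by
  have h := ProbabilityTheory.variance_nonneg u π
  rw [ProbabilityTheory.variance_eq_sub hu] at h
  simp only [Pi.pow_apply] at h
  linarith

lemma aux_norm_integral_sq_le {α : Type*} [MeasurableSpace α] {π : Measure α}
    [IsProbabilityMeasure π] {M : Type*} [NormedAddCommGroup M] [NormedSpace ℝ M]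
    {u : α → M} (hu : MemLp u 2 π) :
    ‖∫ q, u q ∂π‖ ^ 2 ≤ ∫ q, ‖u q‖ ^ 2 ∂π := by
  calc ‖∫ q, u q ∂π‖ ^ 2 ≤ (∫ q, ‖u q‖ ∂π) ^ 2 :=
        pow_le_pow_left₀ (norm_nonneg _) (norm_integral_le_integral_norm u) 2
    _ ≤ _ := aux_sq_integral_le hu.norm

lemma aux_integral_fst {α β E : Type*} [MeasurableSpace α] [MeasurableSpace β]
    [NormedAddCommGroup E] [NormedSpace ℝ E]
    (μ : Measure α) (ν : Measure β) [IsProbabilityMeasure ν] [SFinite μ]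
    {g : α → E} (hg : AEStronglyMeasurable g μ) :
    ∫ q, g q.1 ∂(μ.prod ν) = ∫ x, g x ∂μ := by
  have hmap : Measure.map Prod.fst (μ.prod ν) = μ := by
    rw [Measure.map_fst_prod]; simp
  calc ∫ q, g q.1 ∂(μ.prod ν)
      = ∫ x, g x ∂(Measure.map Prod.fst (μ.prod ν)) :=
        (integral_map measurable_fst.aemeasurable (by rwa [hmap])).symm
    _ = ∫ x, g x ∂μ := by rw [hmap]

lemma aux_integral_snd {α β E : Type*} [MeasurableSpace α] [MeasurableSpace β]
    [NormedAddCommGroup E] [NormedSpace ℝ E]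
    (μ : Measure α) (ν : Measure β) [IsProbabilityMeasure μ] [SFinite ν]
    {g : β → E} (hg : AEStronglyMeasurable g ν) :
    ∫ q, g q.2 ∂(μ.prod ν) = ∫ y, g y ∂ν := by
  have hmap : Measure.map Prod.snd (μ.prod ν) = ν := by
    rw [Measure.map_snd_prod]; simp
  calc ∫ q, g q.2 ∂(μ.prod ν)
      = ∫ y, g y ∂(Measure.map Prod.snd (μ.prod ν)) :=
        (integral_map measurable_snd.aemeasurable (by rwa [hmap])).symm
    _ = ∫ y, g y ∂ν := by rw [hmap]

set_option maxHeartbeats 2000000 in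
theorem convolved_two_measure_monotonicity
    (d l : ℕ) (hd : 1 ≤ d) (hl : 1 ≤ l) (m L : ℝ) (hm : 2 < m)
    (f : EuclideanSpace ℝ (Fin d) → EuclideanSpace ℝ (Fin d))
    (hfm : Measurable f) (hodd : ∀ x, f (-x) = - f x)
    (fσ : EuclideanSpace ℝ (Fin d) → EuclideanSpace ℝ (Fin d × Fin l))
    (hfσm : Measurable fσ)
    (hmono : ∀ x x' : EuclideanSpace ℝ (Fin d),
      ⟪x - x', f x - f x'⟫ + 2 * (m - 1) * ‖fσ x - fσ x'‖ ^ 2 ≤ L * ‖x - x'‖ ^ 2)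
    (μ ν : Measure (EuclideanSpace ℝ (Fin d)))
    [IsProbabilityMeasure μ] [IsProbabilityMeasure ν]
    (hμ2 : Integrable (fun x => ‖x‖ ^ 2) μ) (hν2 : Integrable (fun x => ‖x‖ ^ 2) ν)
    (hint : Integrable
      (fun q : (EuclideanSpace ℝ (Fin d) × EuclideanSpace ℝ (Fin d)) ×
          (EuclideanSpace ℝ (Fin d) × EuclideanSpace ℝ (Fin d)) =>
        (‖q.1.1‖ + ‖q.1.2‖) * (‖f (q.1.1 - q.2.1)‖ + ‖f (q.1.2 - q.2.2)‖)
          + (‖fσ (q.1.1 - q.2.1)‖ + ‖fσ (q.1.2 - q.2.2)‖) ^ 2)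
      ((μ.prod ν).prod (μ.prod ν))) :
    ∫ x, ∫ y,
        (⟪x - y, (∫ x', f (x - x') ∂μ) - ∫ y', f (y - y') ∂ν⟫
          + (m - 1) * ‖(∫ x', fσ (x - x') ∂μ) - ∫ y', fσ (y - y') ∂ν‖ ^ 2) ∂ν ∂μ
      ≤ 2 * max L 0 * ∫ x, ∫ y, ‖x - y‖ ^ 2 ∂ν ∂μ := by
  have hm1 : (0:ℝ) ≤ m - 1 := by linarith
  have hL0 : 0 ≤ max L 0 := le_max_right _ _
  set π := μ.prod ν with hπ
  haveI hπP : IsProbabilityMeasure π := by rw [hπ]; infer_instance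
  -- names for the relevant functions on the double product space
  set H : (EuclideanSpace ℝ (Fin d) × EuclideanSpace ℝ (Fin d)) ×
      (EuclideanSpace ℝ (Fin d) × EuclideanSpace ℝ (Fin d)) → ℝ := fun q =>
      (‖q.1.1‖ + ‖q.1.2‖) * (‖f (q.1.1 - q.2.1)‖ + ‖f (q.1.2 - q.2.2)‖)
        + (‖fσ (q.1.1 - q.2.1)‖ + ‖fσ (q.1.2 - q.2.2)‖) ^ 2 with hHdef
  have hintH : Integrable H (π.prod π) := hint
  set A : (EuclideanSpace ℝ (Fin d) × EuclideanSpace ℝ (Fin d)) ×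
      (EuclideanSpace ℝ (Fin d) × EuclideanSpace ℝ (Fin d)) → ℝ := fun q =>
      ⟪q.1.1 - q.1.2, f (q.1.1 - q.2.1) - f (q.1.2 - q.2.2)⟫ with hAdef
  set B : (EuclideanSpace ℝ (Fin d) × EuclideanSpace ℝ (Fin d)) ×
      (EuclideanSpace ℝ (Fin d) × EuclideanSpace ℝ (Fin d)) → ℝ := fun q =>
      ‖fσ (q.1.1 - q.2.1) - fσ (q.1.2 - q.2.2)‖ ^ 2 with hBdef
  set C : (EuclideanSpace ℝ (Fin d) × EuclideanSpace ℝ (Fin d)) ×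
      (EuclideanSpace ℝ (Fin d) × EuclideanSpace ℝ (Fin d)) → ℝ := fun q =>
      ⟪(q.1.1 - q.2.1) - (q.1.2 - q.2.2), f (q.1.1 - q.2.1) - f (q.1.2 - q.2.2)⟫ with hCdef
  set D : (EuclideanSpace ℝ (Fin d) × EuclideanSpace ℝ (Fin d)) ×
      (EuclideanSpace ℝ (Fin d) × EuclideanSpace ℝ (Fin d)) → ℝ := fun q =>
      ‖(q.1.1 - q.2.1) - (q.1.2 - q.2.2)‖ ^ 2 with hDdef
  set w : EuclideanSpace ℝ (Fin d) × EuclideanSpace ℝ (Fin d) → ℝ := fun p =>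
      ‖p.1 - p.2‖ ^ 2 with hwdef
  -- measurability
  have hmf1 : Measurable fun q : (EuclideanSpace ℝ (Fin d) × EuclideanSpace ℝ (Fin d)) ×
      (EuclideanSpace ℝ (Fin d) × EuclideanSpace ℝ (Fin d)) => f (q.1.1 - q.2.1) :=
    hfm.comp (measurable_fst.fst.sub measurable_snd.fst)
  have hmf2 : Measurable fun q : (EuclideanSpace ℝ (Fin d) × EuclideanSpace ℝ (Fin d)) ×
      (EuclideanSpace ℝ (Fin d) × EuclideanSpace ℝ (Fin d)) => f (q.1.2 - q.2.2) :=
    hfm.comp (measurable_fst.snd.sub measurable_snd.snd)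
  have hmg1 : Measurable fun q : (EuclideanSpace ℝ (Fin d) × EuclideanSpace ℝ (Fin d)) ×
      (EuclideanSpace ℝ (Fin d) × EuclideanSpace ℝ (Fin d)) => fσ (q.1.1 - q.2.1) :=
    hfσm.comp (measurable_fst.fst.sub measurable_snd.fst)
  have hmg2 : Measurable fun q : (EuclideanSpace ℝ (Fin d) × EuclideanSpace ℝ (Fin d)) ×
      (EuclideanSpace ℝ (Fin d) × EuclideanSpace ℝ (Fin d)) => fσ (q.1.2 - q.2.2) :=
    hfσm.comp (measurable_fst.snd.sub measurable_snd.snd)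
  have hAm : Measurable A :=
    (measurable_fst.fst.sub measurable_fst.snd).inner (hmf1.sub hmf2)
  have hBm : Measurable B := ((hmg1.sub hmg2).norm).pow_const 2
  have hCm : Measurable C :=
    ((measurable_fst.fst.sub measurable_snd.fst).sub
      (measurable_fst.snd.sub measurable_snd.snd)).inner (hmf1.sub hmf2)
  have hDm : Measurable D :=
    (((measurable_fst.fst.sub measurable_snd.fst).sub
      (measurable_fst.snd.sub measurable_snd.snd)).norm).pow_const 2
  have hwm : Measurable w := ((measurable_fst.sub measurable_snd).norm).pow_const 2
  -- nonnegativity and pointwise bounds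
  have hHnn : ∀ q, 0 ≤ H q := by
    intro q; simp only [hHdef]; positivity
  have hAbound : ∀ q, |A q| ≤ H q := by
    intro q
    simp only [hAdef, hHdef]
    calc |⟪q.1.1 - q.1.2, f (q.1.1 - q.2.1) - f (q.1.2 - q.2.2)⟫|
        ≤ ‖q.1.1 - q.1.2‖ * ‖f (q.1.1 - q.2.1) - f (q.1.2 - q.2.2)‖ :=
          abs_real_inner_le_norm _ _
      _ ≤ (‖q.1.1‖ + ‖q.1.2‖) * (‖f (q.1.1 - q.2.1)‖ + ‖f (q.1.2 - q.2.2)‖) :=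
          mul_le_mul (norm_sub_le _ _) (norm_sub_le _ _) (norm_nonneg _) (by positivity)
      _ ≤ _ := le_add_of_nonneg_right (by positivity)
  have hBbound : ∀ q, B q ≤ H q := by
    intro q
    simp only [hBdef, hHdef]
    calc ‖fσ (q.1.1 - q.2.1) - fσ (q.1.2 - q.2.2)‖ ^ 2
        ≤ (‖fσ (q.1.1 - q.2.1)‖ + ‖fσ (q.1.2 - q.2.2)‖) ^ 2 :=
          pow_le_pow_left₀ (norm_nonneg _) (norm_sub_le _ _) 2
      _ ≤ _ := le_add_of_nonneg_left (by positivity)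
  -- integrability on the double product
  have hAint : Integrable A (π.prod π) :=
    hintH.mono' hAm.aestronglyMeasurable
      (Filter.Eventually.of_forall fun q => by
        simpa [Real.norm_eq_abs] using hAbound q)
  have hBint : Integrable B (π.prod π) :=
    hintH.mono' hBm.aestronglyMeasurable
      (Filter.Eventually.of_forall fun q => by
        have := hBbound q
        have h0 : (0:ℝ) ≤ B q := by simp only [hBdef]; positivity
        simpa [Real.norm_eq_abs, abs_of_nonneg h0] using this)
  -- symmetrization: A q + A (swap q) = C q
  have hswap : ∀ q : (EuclideanSpace ℝ (Fin d) × EuclideanSpace ℝ (Fin d)) ×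
      (EuclideanSpace ℝ (Fin d) × EuclideanSpace ℝ (Fin d)),
      A q + A (Prod.swap q) = C q := by
    intro q
    simp only [hAdef, hCdef, Prod.swap]
    have hneg : f (q.2.1 - q.1.1) - f (q.2.2 - q.1.2)
        = -(f (q.1.1 - q.2.1) - f (q.1.2 - q.2.2)) := by
      rw [← neg_sub q.1.1 q.2.1, ← neg_sub q.1.2 q.2.2, hodd, hodd]; abel
    rw [hneg, inner_neg_right, ← sub_eq_add_neg, ← inner_sub_left]
    congr 1
    abel
  have hAswapint : Integrable (A ∘ Prod.swap) (π.prod π) := hAint.swap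
  have hCint : Integrable C (π.prod π) := by
    refine (hAint.add hAswapint).congr (Filter.Eventually.of_forall fun q => ?_)
    simpa [Function.comp] using hswap q
  have hJswap : ∫ q, A q ∂(π.prod π) = ∫ q, A (Prod.swap q) ∂(π.prod π) :=
    (integral_prod_swap A).symm
  have h2J : 2 * ∫ q, A q ∂(π.prod π) = ∫ q, C q ∂(π.prod π) := by
    have e1 : ∫ q, (A q + A (Prod.swap q)) ∂(π.prod π)
        = (∫ q, A q ∂(π.prod π)) + ∫ q, A (Prod.swap q) ∂(π.prod π) :=
      integral_add hAint hAswapint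
    have e2 : ∫ q, (A q + A (Prod.swap q)) ∂(π.prod π) = ∫ q, C q ∂(π.prod π) :=
      integral_congr_ae (Filter.Eventually.of_forall fun q => hswap q)
    linarith [hJswap, e1, e2]
  -- pointwise monotonicity bound
  have hCD : ∀ q, C q + 2 * (m - 1) * B q ≤ max L 0 * D q := by
    intro q
    simp only [hCdef, hBdef, hDdef]
    have h1 := hmono (q.1.1 - q.2.1) (q.1.2 - q.2.2)
    have h2 : L * ‖(q.1.1 - q.2.1) - (q.1.2 - q.2.2)‖ ^ 2
        ≤ max L 0 * ‖(q.1.1 - q.2.1) - (q.1.2 - q.2.2)‖ ^ 2 :=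
      mul_le_mul_of_nonneg_right (le_max_left _ _) (by positivity)
    linarith
  -- integrability of w and D
  have hw1 : Integrable (fun p : EuclideanSpace ℝ (Fin d) × EuclideanSpace ℝ (Fin d) =>
      ‖p.1‖ ^ 2) π := by
    have hmap : Measure.map Prod.fst π = μ := by
      rw [hπ, Measure.map_fst_prod]; simp
    exact (integrable_map_measure (g := fun x : EuclideanSpace ℝ (Fin d) => ‖x‖ ^ 2)
      (by rw [hmap]; exact hμ2.aestronglyMeasurable)
      measurable_fst.aemeasurable).mp (by rwa [hmap])
  have hw2 : Integrable (fun p : EuclideanSpace ℝ (Fin d) × EuclideanSpace ℝ (Fin d) =>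
      ‖p.2‖ ^ 2) π := by
    have hmap : Measure.map Prod.snd π = ν := by
      rw [hπ, Measure.map_snd_prod]; simp
    exact (integrable_map_measure (g := fun x : EuclideanSpace ℝ (Fin d) => ‖x‖ ^ 2)
      (by rw [hmap]; exact hν2.aestronglyMeasurable)
      measurable_snd.aemeasurable).mp (by rwa [hmap])
  have hwint : Integrable w π := by
    refine Integrable.mono' ((hw1.const_mul 2).add (hw2.const_mul 2))
      hwm.aestronglyMeasurable (Filter.Eventually.of_forall fun p => ?_)
    simp only [hwdef, Pi.add_apply]
    rw [Real.norm_eq_abs, abs_of_nonneg (by positivity)]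
    nlinarith [norm_sub_le p.1 p.2, norm_nonneg p.1, norm_nonneg p.2,
      sq_nonneg (‖p.1‖ - ‖p.2‖), norm_nonneg (p.1 - p.2)]
  have hwfst : Integrable (fun q : (EuclideanSpace ℝ (Fin d) × EuclideanSpace ℝ (Fin d)) ×
      (EuclideanSpace ℝ (Fin d) × EuclideanSpace ℝ (Fin d)) => w q.1) (π.prod π) := by
    have hmap : Measure.map Prod.fst (π.prod π) = π := by
      rw [Measure.map_fst_prod]; simp
    exact (integrable_map_measure (by rw [hmap]; exact hwint.aestronglyMeasurable)
      measurable_fst.aemeasurable).mp (by rwa [hmap])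
  have hwsnd : Integrable (fun q : (EuclideanSpace ℝ (Fin d) × EuclideanSpace ℝ (Fin d)) ×
      (EuclideanSpace ℝ (Fin d) × EuclideanSpace ℝ (Fin d)) => w q.2) (π.prod π) := by
    have hmap : Measure.map Prod.snd (π.prod π) = π := by
      rw [Measure.map_snd_prod]; simp
    exact (integrable_map_measure (by rw [hmap]; exact hwint.aestronglyMeasurable)
      measurable_snd.aemeasurable).mp (by rwa [hmap])
  have hDle : ∀ q : (EuclideanSpace ℝ (Fin d) × EuclideanSpace ℝ (Fin d)) ×
      (EuclideanSpace ℝ (Fin d) × EuclideanSpace ℝ (Fin d)),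
      D q ≤ 2 * w q.1 + 2 * w q.2 := by
    intro q
    simp only [hDdef, hwdef]
    have hvec : (q.1.1 - q.2.1) - (q.1.2 - q.2.2) = (q.1.1 - q.1.2) - (q.2.1 - q.2.2) := by
      abel
    rw [hvec]
    nlinarith [norm_sub_le (q.1.1 - q.1.2) (q.2.1 - q.2.2), norm_nonneg (q.1.1 - q.1.2),
      norm_nonneg (q.2.1 - q.2.2), sq_nonneg (‖q.1.1 - q.1.2‖ - ‖q.2.1 - q.2.2‖),
      norm_nonneg ((q.1.1 - q.1.2) - (q.2.1 - q.2.2))]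
  have hDint : Integrable D (π.prod π) := by
    refine Integrable.mono' ((hwfst.const_mul 2).add (hwsnd.const_mul 2))
      hDm.aestronglyMeasurable (Filter.Eventually.of_forall fun q => ?_)
    have h0 : (0:ℝ) ≤ D q := by simp only [hDdef]; positivity
    simp only [Pi.add_apply]
    rw [Real.norm_eq_abs, abs_of_nonneg h0]
    exact hDle q
  have hDbound : ∫ q, D q ∂(π.prod π) ≤ 4 * ∫ p, w p ∂π := by
    have h1 : ∫ q, D q ∂(π.prod π) ≤ ∫ q, (2 * w q.1 + 2 * w q.2) ∂(π.prod π) :=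
      integral_mono hDint ((hwfst.const_mul 2).add (hwsnd.const_mul 2)) hDle
    have h2 : ∫ q, (2 * w q.1 + 2 * w q.2) ∂(π.prod π)
        = 2 * (∫ p, w p ∂π) + 2 * ∫ p, w p ∂π := by
      rw [integral_add (hwfst.const_mul 2) (hwsnd.const_mul 2),
        integral_const_mul, integral_const_mul,
        aux_integral_fst π π hwint.aestronglyMeasurable,
        aux_integral_snd π π hwint.aestronglyMeasurable]
    linarith
  -- strong measurability of the convolution maps
  have hFc : StronglyMeasurable (fun x : EuclideanSpace ℝ (Fin d) => ∫ x', f (x - x') ∂μ) :=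
    MeasureTheory.StronglyMeasurable.integral_prod_right
      (f := fun x x' => f (x - x'))
      ((hfm.comp (measurable_fst.sub measurable_snd)).stronglyMeasurable)
  have hGc : StronglyMeasurable (fun y : EuclideanSpace ℝ (Fin d) => ∫ y', f (y - y') ∂ν) :=
    MeasureTheory.StronglyMeasurable.integral_prod_right
      (f := fun y y' => f (y - y'))
      ((hfm.comp (measurable_fst.sub measurable_snd)).stronglyMeasurable)
  have hFσc : StronglyMeasurable (fun x : EuclideanSpace ℝ (Fin d) => ∫ x', fσ (x - x') ∂μ) :=
    MeasureTheory.StronglyMeasurable.integral_prod_right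
      (f := fun x x' => fσ (x - x'))
      ((hfσm.comp (measurable_fst.sub measurable_snd)).stronglyMeasurable)
  have hGσc : StronglyMeasurable (fun y : EuclideanSpace ℝ (Fin d) => ∫ y', fσ (y - y') ∂ν) :=
    MeasureTheory.StronglyMeasurable.integral_prod_right
      (f := fun y y' => fσ (y - y'))
      ((hfσm.comp (measurable_fst.sub measurable_snd)).stronglyMeasurable)
  set φ : EuclideanSpace ℝ (Fin d) × EuclideanSpace ℝ (Fin d) → ℝ := fun p =>
    ⟪p.1 - p.2, (∫ x', f (p.1 - x') ∂μ) - ∫ y', f (p.2 - y') ∂ν⟫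
      + (m - 1) * ‖(∫ x', fσ (p.1 - x') ∂μ) - ∫ y', fσ (p.2 - y') ∂ν‖ ^ 2 with hφdef
  have hφm : AEStronglyMeasurable φ π := by
    apply Measurable.aestronglyMeasurable
    apply Measurable.add
    · exact (measurable_fst.sub measurable_snd).inner
        ((hFc.measurable.comp measurable_fst).sub (hGc.measurable.comp measurable_snd))
    · exact (((hFσc.measurable.comp measurable_fst).sub
        (hGσc.measurable.comp measurable_snd)).norm.pow_const 2).const_mul (m - 1)
  -- the key almost-everywhere estimate
  have hae : ∀ᵐ p ∂π, φ p ≤ (∫ q, (A (p, q) + (m - 1) * B (p, q)) ∂π)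
      ∧ ‖φ p‖ ≤ m * ∫ q, H (p, q) ∂π := by
    filter_upwards [hintH.prod_right_ae] with p hHp
    have hApm : Measurable fun q => A (p, q) := hAm.comp (measurable_const.prodMk measurable_id)
    have hAp : Integrable (fun q => A (p, q)) π :=
      hHp.mono' hApm.aestronglyMeasurable
        (Filter.Eventually.of_forall fun q => by simpa [Real.norm_eq_abs] using hAbound (p, q))
    have hBpm : Measurable fun q => B (p, q) := hBm.comp (measurable_const.prodMk measurable_id)
    have hBp : Integrable (fun q => B (p, q)) π :=
      hHp.mono' hBpm.aestronglyMeasurable (Filter.Eventually.of_forall fun q => by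
        have h0 : (0:ℝ) ≤ B (p, q) := by simp only [hBdef]; positivity
        simpa [Real.norm_eq_abs, abs_of_nonneg h0] using hBbound (p, q))
    have hσ1m : Measurable fun q : EuclideanSpace ℝ (Fin d) × EuclideanSpace ℝ (Fin d) =>
        fσ (p.1 - q.1) := hfσm.comp (measurable_const.sub measurable_fst)
    have hσ2m : Measurable fun q : EuclideanSpace ℝ (Fin d) × EuclideanSpace ℝ (Fin d) =>
        fσ (p.2 - q.2) := hfσm.comp (measurable_const.sub measurable_snd)
    have hσ1sq : Integrable (fun q : EuclideanSpace ℝ (Fin d) × EuclideanSpace ℝ (Fin d) =>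
        ‖fσ (p.1 - q.1)‖ ^ 2) π := by
      refine hHp.mono' (hσ1m.norm.pow_const 2).aestronglyMeasurable
        (Filter.Eventually.of_forall fun q => ?_)
      have h0 : (0:ℝ) ≤ ‖fσ (p.1 - q.1)‖ ^ 2 := by positivity
      rw [Real.norm_eq_abs, abs_of_nonneg h0]
      simp only [hHdef]
      nlinarith [norm_nonneg (fσ (p.1 - q.1)), norm_nonneg (fσ (p.2 - q.2)),
        mul_nonneg (norm_nonneg (fσ (p.1 - q.1))) (norm_nonneg (fσ (p.2 - q.2))),
        mul_nonneg (add_nonneg (norm_nonneg p.1) (norm_nonneg p.2))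
          (add_nonneg (norm_nonneg (f (p.1 - q.1))) (norm_nonneg (f (p.2 - q.2))))]
    have hσ2sq : Integrable (fun q : EuclideanSpace ℝ (Fin d) × EuclideanSpace ℝ (Fin d) =>
        ‖fσ (p.2 - q.2)‖ ^ 2) π := by
      refine hHp.mono' (hσ2m.norm.pow_const 2).aestronglyMeasurable
        (Filter.Eventually.of_forall fun q => ?_)
      have h0 : (0:ℝ) ≤ ‖fσ (p.2 - q.2)‖ ^ 2 := by positivity
      rw [Real.norm_eq_abs, abs_of_nonneg h0]
      simp only [hHdef]
      nlinarith [norm_nonneg (fσ (p.1 - q.1)), norm_nonneg (fσ (p.2 - q.2)),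
        mul_nonneg (norm_nonneg (fσ (p.1 - q.1))) (norm_nonneg (fσ (p.2 - q.2))),
        mul_nonneg (add_nonneg (norm_nonneg p.1) (norm_nonneg p.2))
          (add_nonneg (norm_nonneg (f (p.1 - q.1))) (norm_nonneg (f (p.2 - q.2))))]
    have hσ1 : MemLp (fun q : EuclideanSpace ℝ (Fin d) × EuclideanSpace ℝ (Fin d) =>
        fσ (p.1 - q.1)) 2 π :=
      (memLp_two_iff_integrable_sq_norm hσ1m.aestronglyMeasurable).2 hσ1sq
    have hσ2 : MemLp (fun q : EuclideanSpace ℝ (Fin d) × EuclideanSpace ℝ (Fin d) =>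
        fσ (p.2 - q.2)) 2 π :=
      (memLp_two_iff_integrable_sq_norm hσ2m.aestronglyMeasurable).2 hσ2sq
    have hu : MemLp (fun q : EuclideanSpace ℝ (Fin d) × EuclideanSpace ℝ (Fin d) =>
        fσ (p.1 - q.1) - fσ (p.2 - q.2)) 2 π := hσ1.sub hσ2
    have eσ1 : (∫ x', fσ (p.1 - x') ∂μ) = ∫ q, fσ (p.1 - q.1) ∂π := by
      rw [hπ]
      exact (aux_integral_fst μ ν
        ((hfσm.comp (measurable_const.sub measurable_id)).aestronglyMeasurable)).symm
    have eσ2 : (∫ y', fσ (p.2 - y') ∂ν) = ∫ q, fσ (p.2 - q.2) ∂π := by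
      rw [hπ]
      exact (aux_integral_snd μ ν
        ((hfσm.comp (measurable_const.sub measurable_id)).aestronglyMeasurable)).symm
    have eσ : (∫ x', fσ (p.1 - x') ∂μ) - (∫ y', fσ (p.2 - y') ∂ν)
        = ∫ q, (fσ (p.1 - q.1) - fσ (p.2 - q.2)) ∂π := by
      rw [eσ1, eσ2, ← integral_sub (hσ1.integrable one_le_two) (hσ2.integrable one_le_two)]
    have hσle : ‖(∫ x', fσ (p.1 - x') ∂μ) - ∫ y', fσ (p.2 - y') ∂ν‖ ^ 2
        ≤ ∫ q, B (p, q) ∂π := by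
      rw [eσ]
      simp only [hBdef]
      exact aux_norm_integral_sq_le hu
    have hinner : ⟪p.1 - p.2, (∫ x', f (p.1 - x') ∂μ) - ∫ y', f (p.2 - y') ∂ν⟫
        = ∫ q, A (p, q) ∂π := by
      rcases eq_or_ne (p.1 - p.2) (0 : EuclideanSpace ℝ (Fin d)) with hv | hv
      · simp only [hAdef, hv, inner_zero_left, integral_zero]
      · have hpos : 0 < ‖p.1‖ + ‖p.2‖ := by
          rcases (add_nonneg (norm_nonneg p.1) (norm_nonneg p.2)).eq_or_lt with h0 | h0
          · exfalso
            have h1 : ‖p.1‖ = 0 := by nlinarith [norm_nonneg p.1, norm_nonneg p.2]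
            have h2 : ‖p.2‖ = 0 := by nlinarith [norm_nonneg p.1, norm_nonneg p.2]
            rw [norm_eq_zero] at h1 h2
            exact hv (by rw [h1, h2, sub_zero])
          · exact h0
        have hf1i : Integrable (fun q : EuclideanSpace ℝ (Fin d) × EuclideanSpace ℝ (Fin d) =>
            f (p.1 - q.1)) π := by
          refine (hHp.const_mul (‖p.1‖ + ‖p.2‖)⁻¹).mono'
            ((hfm.comp (measurable_const.sub measurable_fst)).aestronglyMeasurable)
            (Filter.Eventually.of_forall fun q => ?_)
          have hb : (‖p.1‖ + ‖p.2‖) * ‖f (p.1 - q.1)‖ ≤ H (p, q) := by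
            simp only [hHdef]
            nlinarith [mul_nonneg hpos.le (norm_nonneg (f (p.2 - q.2))),
              sq_nonneg (‖fσ (p.1 - q.1)‖ + ‖fσ (p.2 - q.2)‖)]
          calc ‖f (p.1 - q.1)‖
              = (‖p.1‖ + ‖p.2‖)⁻¹ * ((‖p.1‖ + ‖p.2‖) * ‖f (p.1 - q.1)‖) := by
                field_simp
            _ ≤ (‖p.1‖ + ‖p.2‖)⁻¹ * H (p, q) :=
                mul_le_mul_of_nonneg_left hb (inv_nonneg.2 hpos.le)
        have hf2i : Integrable (fun q : EuclideanSpace ℝ (Fin d) × EuclideanSpace ℝ (Fin d) =>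
            f (p.2 - q.2)) π := by
          refine (hHp.const_mul (‖p.1‖ + ‖p.2‖)⁻¹).mono'
            ((hfm.comp (measurable_const.sub measurable_snd)).aestronglyMeasurable)
            (Filter.Eventually.of_forall fun q => ?_)
          have hb : (‖p.1‖ + ‖p.2‖) * ‖f (p.2 - q.2)‖ ≤ H (p, q) := by
            simp only [hHdef]
            nlinarith [mul_nonneg hpos.le (norm_nonneg (f (p.1 - q.1))),
              sq_nonneg (‖fσ (p.1 - q.1)‖ + ‖fσ (p.2 - q.2)‖)]
          calc ‖f (p.2 - q.2)‖
              = (‖p.1‖ + ‖p.2‖)⁻¹ * ((‖p.1‖ + ‖p.2‖) * ‖f (p.2 - q.2)‖) := by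
                field_simp
            _ ≤ (‖p.1‖ + ‖p.2‖)⁻¹ * H (p, q) :=
                mul_le_mul_of_nonneg_left hb (inv_nonneg.2 hpos.le)
        have ef1 : (∫ x', f (p.1 - x') ∂μ) = ∫ q, f (p.1 - q.1) ∂π := by
          rw [hπ]
          exact (aux_integral_fst μ ν
            ((hfm.comp (measurable_const.sub measurable_id)).aestronglyMeasurable)).symm
        have ef2 : (∫ y', f (p.2 - y') ∂ν) = ∫ q, f (p.2 - q.2) ∂π := by
          rw [hπ]
          exact (aux_integral_snd μ ν
            ((hfm.comp (measurable_const.sub measurable_id)).aestronglyMeasurable)).symm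
        have hkey2 : ∫ q, ⟪p.1 - p.2, f (p.1 - q.1) - f (p.2 - q.2)⟫ ∂π
            = ⟪p.1 - p.2, ∫ q, (f (p.1 - q.1) - f (p.2 - q.2)) ∂π⟫ :=
          integral_inner (𝕜 := ℝ) (hf1i.sub hf2i) (p.1 - p.2)
        rw [ef1, ef2, ← integral_sub hf1i hf2i, ← hkey2]
    have hsum : ∫ q, (A (p, q) + (m - 1) * B (p, q)) ∂π
        = (∫ q, A (p, q) ∂π) + (m - 1) * ∫ q, B (p, q) ∂π := by
      rw [integral_add hAp (hBp.const_mul (m - 1)), integral_const_mul]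
    have hσle' : (m - 1) * ‖(∫ x', fσ (p.1 - x') ∂μ) - ∫ y', fσ (p.2 - y') ∂ν‖ ^ 2
        ≤ (m - 1) * ∫ q, B (p, q) ∂π := mul_le_mul_of_nonneg_left hσle hm1
    constructor
    · simp only [hφdef]
      rw [hsum, hinner]
      linarith [hσle']
    · have hHnn' : 0 ≤ ∫ q, H (p, q) ∂π := integral_nonneg fun q => hHnn (p, q)
      have hAabs : |∫ q, A (p, q) ∂π| ≤ ∫ q, H (p, q) ∂π := by
        calc |∫ q, A (p, q) ∂π| ≤ ∫ q, |A (p, q)| ∂π := by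
              simpa [Real.norm_eq_abs] using
                norm_integral_le_integral_norm (μ := π) (fun q => A (p, q))
          _ ≤ ∫ q, H (p, q) ∂π := integral_mono hAp.abs hHp fun q => hAbound (p, q)
      have hBH : ∫ q, B (p, q) ∂π ≤ ∫ q, H (p, q) ∂π :=
        integral_mono hBp hHp fun q => hBbound (p, q)
      simp only [hφdef]
      rw [Real.norm_eq_abs, hinner]
      have habs2 : |(m - 1) * ‖(∫ x', fσ (p.1 - x') ∂μ) - ∫ y', fσ (p.2 - y') ∂ν‖ ^ 2|
          = (m - 1) * ‖(∫ x', fσ (p.1 - x') ∂μ) - ∫ y', fσ (p.2 - y') ∂ν‖ ^ 2 :=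
        abs_of_nonneg (by positivity)
      have h3 := abs_add_le (∫ q, A (p, q) ∂π)
        ((m - 1) * ‖(∫ x', fσ (p.1 - x') ∂μ) - ∫ y', fσ (p.2 - y') ∂ν‖ ^ 2)
      have h5 : (m - 1) * ∫ q, B (p, q) ∂π ≤ (m - 1) * ∫ q, H (p, q) ∂π :=
        mul_le_mul_of_nonneg_left hBH hm1
      linarith [h3, habs2, hAabs, hσle', h5]
  -- integrability of φ and of the majorant
  have hHint2 : Integrable (fun p => ∫ q, H (p, q) ∂π) π := hintH.integral_prod_left
  have hφint : Integrable φ π :=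
    Integrable.mono' (hHint2.const_mul m) hφm (hae.mono fun p hp => hp.2)
  have hΨint : Integrable (fun p => ∫ q, (A (p, q) + (m - 1) * B (p, q)) ∂π) π :=
    (hAint.add (hBint.const_mul (m - 1))).integral_prod_left
  have hmono2 : ∫ p, φ p ∂π ≤ ∫ p, (∫ q, (A (p, q) + (m - 1) * B (p, q)) ∂π) ∂π :=
    integral_mono_ae hφint hΨint (hae.mono fun p hp => hp.1)
  have hfub : ∫ p, (∫ q, (A (p, q) + (m - 1) * B (p, q)) ∂π) ∂π
      = ∫ q, (A q + (m - 1) * B q) ∂(π.prod π) :=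
    integral_integral (hAint.add (hBint.const_mul (m - 1)))
  have hsplit2 : ∫ q, (A q + (m - 1) * B q) ∂(π.prod π)
      = (∫ q, A q ∂(π.prod π)) + (m - 1) * ∫ q, B q ∂(π.prod π) := by
    rw [integral_add hAint (hBint.const_mul (m - 1)), integral_const_mul]
  have hCB : ∫ q, (C q + 2 * (m - 1) * B q) ∂(π.prod π)
      ≤ ∫ q, max L 0 * D q ∂(π.prod π) :=
    integral_mono (hCint.add (hBint.const_mul (2 * (m - 1))))
      (hDint.const_mul (max L 0)) hCD
  have hCBeq : ∫ q, (C q + 2 * (m - 1) * B q) ∂(π.prod π)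
      = (∫ q, C q ∂(π.prod π)) + 2 * (m - 1) * ∫ q, B q ∂(π.prod π) := by
    rw [integral_add hCint (hBint.const_mul (2 * (m - 1))), integral_const_mul]
  have hDeq : ∫ q, max L 0 * D q ∂(π.prod π) = max L 0 * ∫ q, D q ∂(π.prod π) :=
    integral_const_mul _ _
  have hLD : max L 0 * ∫ q, D q ∂(π.prod π) ≤ max L 0 * (4 * ∫ p, w p ∂π) :=
    mul_le_mul_of_nonneg_left hDbound hL0
  have hkey : (∫ q, A q ∂(π.prod π)) + (m - 1) * ∫ q, B q ∂(π.prod π)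
      ≤ 2 * max L 0 * ∫ p, w p ∂π := by
    nlinarith [h2J, hCB, hCBeq, hDeq, hLD]
  have hiter : (∫ x, ∫ y,
        (⟪x - y, (∫ x', f (x - x') ∂μ) - ∫ y', f (y - y') ∂ν⟫
          + (m - 1) * ‖(∫ x', fσ (x - x') ∂μ) - ∫ y', fσ (y - y') ∂ν‖ ^ 2) ∂ν ∂μ)
      = ∫ p, φ p ∂π :=
    integral_integral hφint
  have hRHS : (∫ x, ∫ y, ‖x - y‖ ^ 2 ∂ν ∂μ) = ∫ p, w p ∂π :=
    integral_integral hwint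
  rw [hiter, hRHS]
  calc ∫ p, φ p ∂π ≤ _ := hmono2
    _ = _ := hfub
    _ = _ := hsplit2
    _ ≤ _ := hkey
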